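/- Let F : 𝕋¹ × ℝ → 𝕋¹ × ℝ be a lift of a quasiperiodically forced circle homeomorphism f over the irrational rotation by ω, with fibre maps F_θ. Suppose F satisfies the symmetry F_θ(−x) = 1 − F_{θ+1/2}(x) for all (θ,x). Then the fibred rotation number ρ(F) = lim_{n→∞} (F^n_θ(x) − x)/n equals 1/2. -/

import Mathlib

open Filter

/-- If a lift `F` of a qpf circle homeomorphism over an irrational
rotation satisfies the symmetry `F_θ(-x) = 1 - F_{θ+1/2}(x)`, then the fibred
rotation number `ρ(F) = lim (Fⁿ_θ(x) - x)/n` equals 1/2.  Here `Fit n θ x`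
denotes the fibre map of the n-th iterate, and the existence and
(θ,x)-independence of the limit is assumed. -/
theorem symmetry_forces_rotation_number_half (ω : ℝ) (hω : Irrational ω)
    (F : ℝ → ℝ → ℝ)
    (hmono : ∀ θ, StrictMono (F θ))
    (hper : ∀ θ x, F (θ + 1) x = F θ x)
    (hdeg : ∀ θ x, F θ (x + 1) = F θ x + 1)
    (hsym : ∀ θ x, F θ (-x) = 1 - F (θ + 1/2) x)
    (Fit : ℕ → ℝ → ℝ → ℝ)
    (hFit0 : ∀ θ x, Fit 0 θ x = x)
    (hFitS : ∀ n θ x, Fit (n + 1) θ x = F (θ + n * ω) (Fit n θ x))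
    (ρ : ℝ)
    (hρ : ∀ θ x, Tendsto (fun n : ℕ => (Fit n θ x - x) / n) atTop (nhds ρ)) :
    ρ = 1/2 := by
  -- F θ (x + n) = F θ x + n for natural n
  have hdegn : ∀ (n : ℕ) (θ x : ℝ), F θ (x + n) = F θ x + n := by
    intro n
    induction n with
    | zero => simp
    | succ k ih =>
      intro θ x
      have : (x : ℝ) + (k + 1 : ℕ) = (x + k) + 1 := by push_cast; ring
      rw [this, hdeg, ih]
      push_cast; ring
  -- key identity: Fit n θ (-x) = n - Fit n (θ + 1/2) x
  have key : ∀ (n : ℕ) (θ x : ℝ), Fit n θ (-x) = n - Fit n (θ + 1/2) x := by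
    intro n
    induction n with
    | zero => intro θ x; simp [hFit0]
    | succ k ih =>
      intro θ x
      rw [hFitS, ih, hFitS]
      have h1 : (k : ℝ) - Fit k (θ + 1/2) x = -(Fit k (θ + 1/2) x) + (k : ℕ) := by
        push_cast; ring
      rw [h1, hdegn, hsym]
      have h2 : θ + (k : ℕ) * ω + 1/2 = θ + 1/2 + (k : ℕ) * ω := by ring
      rw [h2]
      push_cast; ring
  -- take limits
  have h1 := hρ 0 (-0)
  have h2 : Tendsto (fun n : ℕ => 1 - (Fit n (0 + 1/2) 0 - 0) / n) atTop (nhds (1 - ρ)) :=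
    (tendsto_const_nhds.sub (hρ (0 + 1/2) 0))
  have heq : ∀ᶠ n : ℕ in atTop,
      (Fit n 0 (-0) - (-0)) / n = 1 - (Fit n (0 + 1/2) 0 - 0) / n := by
    filter_upwards [eventually_gt_atTop 0] with n hn
    have hn' : (n : ℝ) ≠ 0 := Nat.cast_ne_zero.mpr hn.ne'
    rw [key]
    field_simp
    ring
  have := tendsto_nhds_unique (h1.congr' heq) h2
  linarith
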